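/- arXiv:1310.3570 — 9 statements merged into one kernel-verified Lean document; each statement's English description precedes it below -/
import Mathlib

section
/- Let D be an endomorphism of a finite-dimensional vector space V over a field 𝕜 and let k ≥ 0 be an integer. Then dim H^k(V,D) = rank(D^{2k}) − 2·rank(D^{2k+1}) + rank(D^{2k+2}); equivalently, dim(range(D^{2k}) ∩ ker D) + 2·rank(D^{2k+1}) = dim(range(D^{2k+1}) ∩ ker D) + rank(D^{2k}) + rank(D^{2k+2}). (This number is the number of Jordan blocks of size exactly 2k+1 in the nilpotent part of D, so this is the dimension form of Theorem 3.2: H^k picks out the bottom vectors of Jordan blocks of size 2k+1.) -/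
open LinearMap Module

lemma aux' {𝕜 V : Type*} [Field 𝕜] [AddCommGroup V] [Module 𝕜 V] [FiniteDimensional 𝕜 V]
    (D : Module.End 𝕜 V) (m : ℕ) :
    finrank 𝕜 ↥(range (D ^ m) ⊓ ker D) + finrank 𝕜 ↥(range (D ^ (m + 1))) =
      finrank 𝕜 ↥(range (D ^ m)) := by
  have hr : range (D.domRestrict (range (D ^ m))) = range (D ^ (m + 1)) := by
    rw [range_domRestrict, pow_succ', Module.End.mul_eq_comp, range_comp]
  have hk : ker (D.domRestrict (range (D ^ m))) =
      Submodule.comap (range (D ^ m)).subtype (ker D) := by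
    ext x; simp [mem_ker]
  have := (D.domRestrict (range (D ^ m))).finrank_range_add_finrank_ker
  rw [hr, hk] at this
  have heq : finrank 𝕜 ↥(Submodule.comap (range (D ^ m)).subtype (ker D)) =
      finrank 𝕜 ↥(range (D ^ m) ⊓ ker D) := by
    rw [← Submodule.finrank_map_subtype_eq, Submodule.map_comap_subtype]
  omega

/-- Dimension form of Theorem 3.2: for an endomorphism `D` of a
finite-dimensional vector space `V` and `k ≥ 0`, with
`H^k(V,D) = (range D^{2k} ⊓ ker D) / (range D^{2k+1} ⊓ ker D)`, one has
`dim H^k(V,D) = rank D^{2k} − 2 rank D^{2k+1} + rank D^{2k+2}`, equivalently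
`dim (range D^{2k} ⊓ ker D) + 2 rank D^{2k+1}
  = dim (range D^{2k+1} ⊓ ker D) + rank D^{2k} + rank D^{2k+2}`. -/
theorem stmt0 {𝕜 V : Type*} [Field 𝕜] [AddCommGroup V] [Module 𝕜 V] [FiniteDimensional 𝕜 V]
    (D : Module.End 𝕜 V) (k : ℕ) :
    (finrank 𝕜 (↥(range (D ^ (2 * k)) ⊓ ker D) ⧸
        Submodule.comap (range (D ^ (2 * k)) ⊓ ker D).subtype
          (range (D ^ (2 * k + 1)) ⊓ ker D)) : ℤ) =
      (finrank 𝕜 ↥(range (D ^ (2 * k))) : ℤ) - 2 * finrank 𝕜 ↥(range (D ^ (2 * k + 1))) +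
        finrank 𝕜 ↥(range (D ^ (2 * k + 2))) ∧
    finrank 𝕜 ↥(range (D ^ (2 * k)) ⊓ ker D) + 2 * finrank 𝕜 ↥(range (D ^ (2 * k + 1))) =
      finrank 𝕜 ↥(range (D ^ (2 * k + 1)) ⊓ ker D) + finrank 𝕜 ↥(range (D ^ (2 * k))) +
        finrank 𝕜 ↥(range (D ^ (2 * k + 2))) := by
  have h0 := aux' D (2 * k)
  have h1 := aux' D (2 * k + 1)
  rw [show 2 * k + 1 + 1 = 2 * k + 2 from rfl] at h1
  have hle : range (D ^ (2 * k + 1)) ⊓ ker D ≤ range (D ^ (2 * k)) ⊓ ker D := by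
    apply inf_le_inf_right
    rw [pow_succ, Module.End.mul_eq_comp, range_comp]
    exact LinearMap.map_le_range
  have hq := Submodule.finrank_quotient_add_finrank
    (Submodule.comap (range (D ^ (2 * k)) ⊓ ker D).subtype (range (D ^ (2 * k + 1)) ⊓ ker D))
  have hc : finrank 𝕜 ↥(Submodule.comap (range (D ^ (2 * k)) ⊓ ker D).subtype
      (range (D ^ (2 * k + 1)) ⊓ ker D)) = finrank 𝕜 ↥(range (D ^ (2 * k + 1)) ⊓ ker D) :=
    (Submodule.comapSubtypeEquivOfLe hle).finrank_eq
  exact ⟨by omega, by omega⟩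
end

section
/- Let D be an endomorphism of a finite-dimensional vector space V over a field such that D² is a semisimple endomorphism (every D²-invariant subspace has a D²-invariant complement). Then range(D²) ∩ ker(D) = 0; consequently range(D^{2k}) ∩ ker(D) = 0 and hence H^k(V,D) = 0 for every k ≥ 1, so the total higher Dirac cohomology reduces to H^0(V,D) = ker D/(range D ∩ ker D). (This is the linear-algebra content of the Corollary: for modules with infinitesimal character the higher Dirac cohomology coincides with the usual Dirac cohomology.) -/
open LinearMap Module

/-- If `D²` is a semisimple endomorphism of a finite-dimensional
vector space `V` (every `D²`-invariant subspace has a `D²`-invariant complement), then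
`range(D²) ∩ ker D = 0`; consequently `range(D^{2k}) ∩ ker D = 0` and hence
`H^k(V,D) = 0` for every `k ≥ 1`. -/
theorem stmt1 {𝕜 V : Type*} [Field 𝕜] [AddCommGroup V] [Module 𝕜 V] [FiniteDimensional 𝕜 V]
    (D : Module.End 𝕜 V)
    (hss : ∀ p : Submodule 𝕜 V, (∀ x ∈ p, (D ^ 2) x ∈ p) →
      ∃ q : Submodule 𝕜 V, (∀ x ∈ q, (D ^ 2) x ∈ q) ∧ IsCompl p q) :
    range (D ^ 2) ⊓ ker D = ⊥ ∧
    (∀ k : ℕ, 1 ≤ k → range (D ^ (2 * k)) ⊓ ker D = ⊥) ∧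
    (∀ k : ℕ, 1 ≤ k →
      Subsingleton (↥(range (D ^ (2 * k)) ⊓ ker D) ⧸
        Submodule.comap (range (D ^ (2 * k)) ⊓ ker D).subtype
          (range (D ^ (2 * k + 1)) ⊓ ker D))) := by
  -- invariant complement of ker (D^2)
  obtain ⟨q, hq, hc⟩ := hss (ker (D ^ 2)) (fun x hx => by
    simp only [mem_ker] at hx ⊢
    rw [hx, map_zero])
  -- range (D^2) ≤ q
  have hrange : range (D ^ 2) ≤ q := by
    rintro _ ⟨x, rfl⟩
    have hx : x ∈ ker (D ^ 2) ⊔ q := by rw [hc.sup_eq_top]; trivial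
    obtain ⟨a, ha, b, hb, rfl⟩ := Submodule.mem_sup.mp hx
    rw [map_add, mem_ker.mp ha, zero_add]
    exact hq b hb
  -- ker D ≤ ker (D^2)
  have hker : ker D ≤ ker (D ^ 2) := by
    intro x hx
    rw [mem_ker, pow_two, Module.End.mul_apply, mem_ker.mp hx, map_zero]
  have h1 : range (D ^ 2) ⊓ ker D = ⊥ := by
    rw [eq_bot_iff]
    calc range (D ^ 2) ⊓ ker D ≤ q ⊓ ker (D ^ 2) := inf_le_inf hrange hker
    _ = ⊥ := by rw [inf_comm]; exact hc.disjoint.eq_bot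
  have h2 : ∀ k : ℕ, 1 ≤ k → range (D ^ (2 * k)) ⊓ ker D = ⊥ := by
    intro k hk
    rw [eq_bot_iff, ← h1]
    refine inf_le_inf ?_ le_rfl
    have : D ^ (2 * k) = D ^ 2 * D ^ (2 * k - 2) := by
      rw [← pow_add]
      congr 1
      omega
    rw [this]
    rintro _ ⟨x, rfl⟩
    exact ⟨(D ^ (2 * k - 2)) x, rfl⟩
  refine ⟨h1, h2, fun k hk => ?_⟩
  have := h2 k hk
  have hsub : Subsingleton (range (D ^ (2 * k)) ⊓ ker D : Submodule 𝕜 V) := by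
    rw [this]
    infer_instance
  exact Quotient.instSubsingletonQuotient _
end

section
/- Let D and a be endomorphisms of a vector space V over a field such that a ∘ D² = D² ∘ a, and let k ≥ 0. Then for every x ∈ range(D^{2k}) ∩ ker(D), one has (D∘a + a∘D)(x) ∈ range(D^{2k+1}) ∩ ker(D). In particular the operator D∘a + a∘D induces the zero map on H^k(V,D). (This is the key step in the proof of Theorem 3.4, the analogue of Vogan's conjecture for higher Dirac cohomology.) -/
open LinearMap Module

/-- If `a ∘ D² = D² ∘ a` then for every
`x ∈ range(D^{2k}) ∩ ker D`, one has `(D∘a + a∘D) x ∈ range(D^{2k+1}) ∩ ker D`;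
in particular `D∘a + a∘D` induces the zero map on `H^k(V,D)`. -/
theorem stmt2 {𝕜 V : Type*} [Field 𝕜] [AddCommGroup V] [Module 𝕜 V]
    (D a : Module.End 𝕜 V) (hcomm : a ∘ₗ (D ^ 2) = (D ^ 2) ∘ₗ a) (k : ℕ) :
    ∀ x ∈ range (D ^ (2 * k)) ⊓ ker D,
      (D ∘ₗ a + a ∘ₗ D) x ∈ range (D ^ (2 * k + 1)) ⊓ ker D := by
  have hc : ∀ v, a ((D ^ 2) v) = (D ^ 2) (a v) := fun v =>
    congrArg (fun f => f v) hcomm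
  have hcomm' : ∀ n : ℕ, ∀ v, a ((D ^ (2 * n)) v) = (D ^ (2 * n)) (a v) := by
    intro n
    induction n with
    | zero => intro v; simp
    | succ n ih =>
      intro v
      have h1 : 2 * (n + 1) = 2 + 2 * n := by ring
      rw [h1, pow_add, Module.End.mul_apply, Module.End.mul_apply, hc, ih]
  rintro x ⟨⟨y, hy⟩, hker⟩
  have hker' : D x = 0 := hker
  have hax : a x = (D ^ (2 * k)) (a y) := by rw [← hy, hcomm']
  constructor
  · refine ⟨a y, ?_⟩
    simp only [LinearMap.add_apply, LinearMap.comp_apply, hker', map_zero, add_zero]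
    rw [pow_succ', Module.End.mul_apply, hax]
  · have hD2x : (D ^ 2) x = 0 := by
      rw [pow_two, Module.End.mul_apply, hker', map_zero]
    have h2 : (D ^ 2) (a x) = 0 := by rw [← hc, hD2x, map_zero]
    rw [pow_two, Module.End.mul_apply] at h2
    have heq : (D ∘ₗ a + a ∘ₗ D) x = D (a x) := by
      simp [hker']
    rw [SetLike.mem_coe, mem_ker, heq, h2]
end

section
/- Let V be a finite-dimensional vector space over a field with a ℤ/2-grading V = V⁺ ⊕ V⁻, and let D be an odd endomorphism of V. Then, as an equality of integers, Σ_{k≥0} ( dim H^k(V,D)⁺ − dim H^k(V,D)⁻ ) = dim V⁺ − dim V⁻, where all but finitely many terms of the sum vanish. (This is the linear-algebra content of Theorem 3.6: the higher Dirac index I(V) = H(V)⁺ − H(V)⁻ equals V⊗S⁺ − V⊗S⁻ on each isotypic component.) -/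
open LinearMap Module

set_option linter.unusedSectionVars false

section Aux

variable {𝕜 V : Type*} [Field 𝕜] [AddCommGroup V] [Module 𝕜 V] [FiniteDimensional 𝕜 V]

private lemma range_pow_succ (D : Module.End 𝕜 V) (n : ℕ) :
    (range (D ^ n)).map D = range (D ^ (n + 1)) := by
  rw [pow_succ' D n, Module.End.mul_eq_comp, range_comp]

private lemma pow_parity (Vp Vm : Submodule 𝕜 V) (D : Module.End 𝕜 V)
    (hoddp : ∀ x ∈ Vp, D x ∈ Vm) (hoddm : ∀ x ∈ Vm, D x ∈ Vp) (n : ℕ) :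
    ((∀ x ∈ Vp, (D ^ n) x ∈ Vp) ∧ (∀ x ∈ Vm, (D ^ n) x ∈ Vm)) ∨
    ((∀ x ∈ Vp, (D ^ n) x ∈ Vm) ∧ (∀ x ∈ Vm, (D ^ n) x ∈ Vp)) := by
  induction n with
  | zero => left; simp
  | succ n ih =>
    have hp : ∀ x : V, (D ^ (n + 1)) x = D ((D ^ n) x) := by
      intro x; rw [pow_succ' D n]; rfl
    rcases ih with ⟨h1, h2⟩ | ⟨h1, h2⟩
    · right; exact ⟨fun x hx => hp x ▸ hoddp _ (h1 x hx),
        fun x hx => hp x ▸ hoddm _ (h2 x hx)⟩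
    · left; exact ⟨fun x hx => hp x ▸ hoddm _ (h1 x hx),
        fun x hx => hp x ▸ hoddp _ (h2 x hx)⟩

private lemma range_graded (Vp Vm : Submodule 𝕜 V) (hcompl : IsCompl Vp Vm)
    (D : Module.End 𝕜 V)
    (hoddp : ∀ x ∈ Vp, D x ∈ Vm) (hoddm : ∀ x ∈ Vm, D x ∈ Vp) (n : ℕ)
    {x : V} (hx : x ∈ range (D ^ n)) :
    ∃ p ∈ range (D ^ n) ⊓ Vp, ∃ m ∈ range (D ^ n) ⊓ Vm, x = p + m := by
  obtain ⟨y, rfl⟩ := hx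
  have hy : y ∈ Vp ⊔ Vm := by rw [hcompl.sup_eq_top]; trivial
  obtain ⟨p0, hp0, m0, hm0, rfl⟩ := Submodule.mem_sup.mp hy
  have hadd : (D ^ n) (p0 + m0) = (D ^ n) p0 + (D ^ n) m0 := map_add _ _ _
  rcases pow_parity Vp Vm D hoddp hoddm n with ⟨h1, h2⟩ | ⟨h1, h2⟩
  · exact ⟨(D ^ n) p0, ⟨⟨p0, rfl⟩, h1 _ hp0⟩, (D ^ n) m0, ⟨⟨m0, rfl⟩, h2 _ hm0⟩, hadd⟩
  · refine ⟨(D ^ n) m0, ⟨⟨m0, rfl⟩, h2 _ hm0⟩, (D ^ n) p0, ⟨⟨p0, rfl⟩, h1 _ hp0⟩, ?_⟩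
    rw [hadd, add_comm]

private lemma map_D_eq (Vp Vm : Submodule 𝕜 V) (hcompl : IsCompl Vp Vm)
    (D : Module.End 𝕜 V)
    (hoddp : ∀ x ∈ Vp, D x ∈ Vm) (hoddm : ∀ x ∈ Vm, D x ∈ Vp) (n : ℕ) :
    (range (D ^ n) ⊓ Vp).map D = range (D ^ (n + 1)) ⊓ Vm := by
  apply le_antisymm
  · rintro _ ⟨x, ⟨hxr, hxp⟩, rfl⟩
    refine ⟨?_, hoddp _ hxp⟩
    have := Submodule.mem_map_of_mem (f := D) hxr
    rwa [range_pow_succ] at this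
  · rintro y ⟨hyr, hym⟩
    have hyr' : y ∈ (range (D ^ n)).map D := by rwa [range_pow_succ]
    obtain ⟨z, hz, rfl⟩ := hyr'
    obtain ⟨p, hp, m, hm, rfl⟩ := range_graded Vp Vm hcompl D hoddp hoddm n hz
    have hDm : D m ∈ Vp := hoddm _ hm.2
    have hDp : D p ∈ Vm := hoddp _ hp.2
    have hadd : D (p + m) = D p + D m := map_add _ _ _
    have hmem : D m ∈ Vp ⊓ Vm := by
      refine ⟨hDm, ?_⟩
      have : D m = D (p + m) - D p := by rw [hadd]; abel
      rw [this]
      exact Vm.sub_mem hym hDp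
    have hDm0 : D m = 0 := by
      rw [hcompl.inf_eq_bot] at hmem
      simpa using hmem
    refine ⟨p, hp, ?_⟩
    rw [hadd, hDm0, add_zero]

private lemma dim_step (Vp Vm : Submodule 𝕜 V) (hcompl : IsCompl Vp Vm)
    (D : Module.End 𝕜 V)
    (hoddp : ∀ x ∈ Vp, D x ∈ Vm) (hoddm : ∀ x ∈ Vm, D x ∈ Vp) (n : ℕ) :
    finrank 𝕜 ↥(range (D ^ n) ⊓ Vp) =
      finrank 𝕜 ↥(range (D ^ (n + 1)) ⊓ Vm) +
        finrank 𝕜 ↥((range (D ^ n) ⊓ ker D) ⊓ Vp) := by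
  set S := range (D ^ n) ⊓ Vp with hS
  have h1 : finrank 𝕜 ↥(LinearMap.range (D.domRestrict S)) +
      finrank 𝕜 ↥(LinearMap.ker (D.domRestrict S)) = finrank 𝕜 ↥S :=
    LinearMap.finrank_range_add_finrank_ker _
  have h2 : LinearMap.range (D.domRestrict S) = range (D ^ (n + 1)) ⊓ Vm := by
    rw [range_domRestrict]
    exact map_D_eq Vp Vm hcompl D hoddp hoddm n
  have h3 : finrank 𝕜 ↥(LinearMap.ker (D.domRestrict S)) =
      finrank 𝕜 ↥((range (D ^ n) ⊓ ker D) ⊓ Vp) := by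
    rw [ker_domRestrict]
    have e := Submodule.comapSubtypeEquivOfLe (p := ker D ⊓ S) (q := S) inf_le_right
    have hc : Submodule.comap S.subtype (ker D) = Submodule.comap S.subtype (ker D ⊓ S) := by
      ext x; simp [Submodule.mem_comap]
    rw [hc, e.finrank_eq]
    have heq : ker D ⊓ S = (range (D ^ n) ⊓ ker D) ⊓ Vp := by
      rw [hS]
      ext x
      simp only [Submodule.mem_inf, mem_ker, LinearMap.mem_range]
      tauto
    rw [heq]
  rw [h2, h3] at h1
  exact h1.symm

private lemma c_eq (Vp Vm : Submodule 𝕜 V) (hcompl : IsCompl Vp Vm)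
    (D : Module.End 𝕜 V)
    (hoddp : ∀ x ∈ Vp, D x ∈ Vm) (hoddm : ∀ x ∈ Vm, D x ∈ Vp) (n : ℕ) :
    (finrank 𝕜 ↥((range (D ^ n) ⊓ ker D) ⊓ Vp) : ℤ) -
      finrank 𝕜 ↥((range (D ^ n) ⊓ ker D) ⊓ Vm) =
    ((finrank 𝕜 ↥(range (D ^ n) ⊓ Vp) : ℤ) - finrank 𝕜 ↥(range (D ^ n) ⊓ Vm)) +
    ((finrank 𝕜 ↥(range (D ^ (n + 1)) ⊓ Vp) : ℤ) -
      finrank 𝕜 ↥(range (D ^ (n + 1)) ⊓ Vm)) := by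
  have h1 := dim_step Vp Vm hcompl D hoddp hoddm n
  have h2 := dim_step Vm Vp hcompl.symm D hoddm hoddp n
  omega

end Aux

/-- Linear-algebra content of Theorem 3.6: for a ℤ/2-graded
finite-dimensional vector space `V = V⁺ ⊕ V⁻` with an odd endomorphism `D`,
`Σ_{k≥0} (dim H^k(V,D)⁺ − dim H^k(V,D)⁻) = dim V⁺ − dim V⁻`,
where `H^k(V,D)^± = ((range D^{2k} ⊓ ker D) ⊓ V^±)/((range D^{2k+1} ⊓ ker D) ⊓ V^±)`
and all but finitely many terms vanish (the sum is a `finsum`). -/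
theorem stmt3 {𝕜 V : Type*} [Field 𝕜] [AddCommGroup V] [Module 𝕜 V] [FiniteDimensional 𝕜 V]
    (Vp Vm : Submodule 𝕜 V) (hcompl : IsCompl Vp Vm)
    (D : Module.End 𝕜 V)
    (hoddp : ∀ x ∈ Vp, D x ∈ Vm) (hoddm : ∀ x ∈ Vm, D x ∈ Vp) :
    ∑ᶠ k : ℕ,
      ((((finrank 𝕜 ↥((range (D ^ (2 * k)) ⊓ ker D) ⊓ Vp) : ℤ) -
          finrank 𝕜 ↥((range (D ^ (2 * k + 1)) ⊓ ker D) ⊓ Vp)) -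
        ((finrank 𝕜 ↥((range (D ^ (2 * k)) ⊓ ker D) ⊓ Vm) : ℤ) -
          finrank 𝕜 ↥((range (D ^ (2 * k + 1)) ⊓ ker D) ⊓ Vm)))) =
      (finrank 𝕜 Vp : ℤ) - finrank 𝕜 Vm := by
  -- `c n` is the super-dimension of `range (D ^ n)`.
  set c : ℕ → ℤ := fun n =>
    (finrank 𝕜 ↥(range (D ^ n) ⊓ Vp) : ℤ) - finrank 𝕜 ↥(range (D ^ n) ⊓ Vm) with hc
  -- each term of the sum telescopes
  have hterm : ∀ k : ℕ,
      ((((finrank 𝕜 ↥((range (D ^ (2 * k)) ⊓ ker D) ⊓ Vp) : ℤ) -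
          finrank 𝕜 ↥((range (D ^ (2 * k + 1)) ⊓ ker D) ⊓ Vp)) -
        ((finrank 𝕜 ↥((range (D ^ (2 * k)) ⊓ ker D) ⊓ Vm) : ℤ) -
          finrank 𝕜 ↥((range (D ^ (2 * k + 1)) ⊓ ker D) ⊓ Vm)))) =
      c (2 * k) - c (2 * k + 2) := by
    intro k
    have h1 := c_eq Vp Vm hcompl D hoddp hoddm (2 * k)
    have h2 := c_eq Vp Vm hcompl D hoddp hoddm (2 * k + 1)
    have e2 : 2 * k + 1 + 1 = 2 * k + 2 := by omega
    rw [e2] at h2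
    simp only [hc]
    omega
  -- the ranges stabilize
  obtain ⟨N, hN⟩ : ∃ N, range (D ^ (N + 1)) = range (D ^ N) := by
    by_contra h
    push_neg at h
    have hle : ∀ n, range (D ^ (n + 1)) ≤ range (D ^ n) := by
      intro n
      rw [← range_pow_succ]
      rintro _ ⟨x, ⟨y, rfl⟩, rfl⟩
      exact ⟨D y, by rw [← Module.End.mul_apply, ← pow_succ, pow_succ', Module.End.mul_apply]⟩
    have hmono : ∀ n, finrank 𝕜 ↥(range (D ^ n)) + n ≤ finrank 𝕜 V := by
      intro n
      induction n with
      | zero => simpa using Submodule.finrank_le (range (D ^ 0))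
      | succ n ih =>
        have hlt : range (D ^ (n + 1)) < range (D ^ n) := lt_of_le_of_ne (hle n) (h n)
        have := Submodule.finrank_lt_finrank_of_lt hlt
        omega
    have := hmono (finrank 𝕜 V + 1)
    omega
  -- beyond N all ranges are equal
  have hstab : ∀ n, N ≤ n → range (D ^ n) = range (D ^ N) := by
    intro n hn
    induction n with
    | zero =>
      have h0 : N = 0 := by omega
      rw [h0]
    | succ n ih =>
      rcases Nat.lt_or_ge N (n + 1) with h' | h'
      · have hn' : N ≤ n := by omega
        rw [← range_pow_succ, ih hn', range_pow_succ]
        exact hN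
      · have hEq : N = n + 1 := le_antisymm hn h'
        rw [hEq]
  -- hence c vanishes beyond N
  have hczero : ∀ n, N ≤ n → c n = 0 := by
    intro n hn
    have h1 := dim_step Vp Vm hcompl D hoddp hoddm n
    have h2 := dim_step Vm Vp hcompl.symm D hoddm hoddp n
    have he : range (D ^ (n + 1)) = range (D ^ n) := by
      rw [hstab n hn, hstab (n + 1) (by omega)]
    rw [he] at h1 h2
    simp only [hc]
    omega
  have hsupp : Function.support (fun k : ℕ =>
      ((((finrank 𝕜 ↥((range (D ^ (2 * k)) ⊓ ker D) ⊓ Vp) : ℤ) -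
          finrank 𝕜 ↥((range (D ^ (2 * k + 1)) ⊓ ker D) ⊓ Vp)) -
        ((finrank 𝕜 ↥((range (D ^ (2 * k)) ⊓ ker D) ⊓ Vm) : ℤ) -
          finrank 𝕜 ↥((range (D ^ (2 * k + 1)) ⊓ ker D) ⊓ Vm))))) ⊆
      ↑(Finset.range (N + 1)) := by
    intro k hk
    simp only [Function.mem_support, hterm k] at hk
    simp only [Finset.coe_range, Set.mem_Iio]
    by_contra hk'
    push_neg at hk'
    have hkN : N ≤ 2 * k := by omega
    rw [hczero _ hkN, hczero _ (by omega)] at hk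
    simp at hk
  rw [finsum_eq_sum_of_support_subset _ hsupp]
  have hsum : ∑ k ∈ Finset.range (N + 1),
      ((((finrank 𝕜 ↥((range (D ^ (2 * k)) ⊓ ker D) ⊓ Vp) : ℤ) -
          finrank 𝕜 ↥((range (D ^ (2 * k + 1)) ⊓ ker D) ⊓ Vp)) -
        ((finrank 𝕜 ↥((range (D ^ (2 * k)) ⊓ ker D) ⊓ Vm) : ℤ) -
          finrank 𝕜 ↥((range (D ^ (2 * k + 1)) ⊓ ker D) ⊓ Vm)))) =
      ∑ k ∈ Finset.range (N + 1), ((fun k => c (2 * k)) k - (fun k => c (2 * k)) (k + 1)) := by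
    apply Finset.sum_congr rfl
    intro k _
    rw [hterm k]
    have : 2 * (k + 1) = 2 * k + 2 := by ring
    simp [this]
  rw [hsum, Finset.sum_range_sub' (fun k => c (2 * k)) (N + 1)]
  have h0 : c (2 * 0) = (finrank 𝕜 Vp : ℤ) - finrank 𝕜 Vm := by
    have e0 : (2 : ℕ) * 0 = 0 := by omega
    have htop : range (D ^ (2 * 0)) = ⊤ := by
      rw [e0, pow_zero, Module.End.one_eq_id, LinearMap.range_id]
    simp only [hc]
    rw [htop, top_inf_eq, top_inf_eq]
  rw [h0, hczero (2 * (N + 1)) (by omega), sub_zero]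
end

section
/- Let 0 → U →ι V →p W → 0 be a short exact sequence of finite-dimensional vector spaces over a field, where U, V, W carry ℤ/2-gradings, the maps ι and p preserve the gradings, U, V, W carry odd endomorphisms D_U, D_V, D_W, and ι ∘ D_U = D_V ∘ ι, p ∘ D_V = D_W ∘ p. Then the higher Dirac index is additive: Σ_{k≥0}( dim H^k(V,D_V)⁺ − dim H^k(V,D_V)⁻ ) = Σ_{k≥0}( dim H^k(U,D_U)⁺ − dim H^k(U,D_U)⁻ ) + Σ_{k≥0}( dim H^k(W,D_W)⁺ − dim H^k(W,D_W)⁻ ), as integers (all sums are finite). (Corollary 3.7: the higher Dirac index descends to the Grothendieck group.) -/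
open LinearMap Module

/-- The higher Dirac index of a ℤ/2-graded vector space `V = V⁺ ⊕ V⁻` with an
(odd) endomorphism `D`:
`I(V) = Σ_{k≥0} (dim H^k(V,D)⁺ − dim H^k(V,D)⁻)`, where
`H^k(V,D)^± = ((range D^{2k} ⊓ ker D) ⊓ V^±)/((range D^{2k+1} ⊓ ker D) ⊓ V^±)`. -/
noncomputable def diracIndex (𝕜 : Type*) {V : Type*} [Field 𝕜] [AddCommGroup V] [Module 𝕜 V]
    (D : Module.End 𝕜 V) (Vp Vm : Submodule 𝕜 V) : ℤ :=
  ∑ᶠ k : ℕ,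
    (((finrank 𝕜 ↥((range (D ^ (2 * k)) ⊓ ker D) ⊓ Vp) : ℤ) -
        finrank 𝕜 ↥((range (D ^ (2 * k + 1)) ⊓ ker D) ⊓ Vp)) -
      ((finrank 𝕜 ↥((range (D ^ (2 * k)) ⊓ ker D) ⊓ Vm) : ℤ) -
        finrank 𝕜 ↥((range (D ^ (2 * k + 1)) ⊓ ker D) ⊓ Vm)))

section Aux

variable {𝕜 V : Type*} [Field 𝕜] [AddCommGroup V] [Module 𝕜 V]

/-- Powers of an odd endomorphism are homogeneous of parity `n`. -/
lemma aux_pow_grading (D : Module.End 𝕜 V) (Vp Vm : Submodule 𝕜 V)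
    (hp : ∀ x ∈ Vp, D x ∈ Vm) (hm : ∀ x ∈ Vm, D x ∈ Vp) (n : ℕ) :
    ((∀ x ∈ Vp, (D ^ n) x ∈ Vp) ∧ (∀ x ∈ Vm, (D ^ n) x ∈ Vm)) ∨
    ((∀ x ∈ Vp, (D ^ n) x ∈ Vm) ∧ (∀ x ∈ Vm, (D ^ n) x ∈ Vp)) := by
  induction n with
  | zero => left; constructor <;> intro x hx <;> simpa using hx
  | succ n ih =>
    have hstep : ∀ x : V, (D ^ (n + 1)) x = (D ^ n) (D x) := by
      intro x; rw [pow_succ, Module.End.mul_apply]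
    rcases ih with ⟨h1, h2⟩ | ⟨h1, h2⟩
    · right; constructor <;> intro x hx <;> rw [hstep]
      · exact h2 _ (hp x hx)
      · exact h1 _ (hm x hx)
    · left; constructor <;> intro x hx <;> rw [hstep]
      · exact h2 _ (hp x hx)
      · exact h1 _ (hm x hx)

/-- Rank–nullity for the restriction of an odd `D` to `range (D^n) ⊓ Vp`. -/
lemma aux_rank_step [FiniteDimensional 𝕜 V] (D : Module.End 𝕜 V) (Vp Vm : Submodule 𝕜 V)
    (hV : IsCompl Vp Vm) (hp : ∀ x ∈ Vp, D x ∈ Vm) (hm : ∀ x ∈ Vm, D x ∈ Vp) (n : ℕ) :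
    finrank 𝕜 ↥((range (D ^ n) ⊓ ker D) ⊓ Vp) + finrank 𝕜 ↥(range (D ^ (n + 1)) ⊓ Vm)
      = finrank 𝕜 ↥(range (D ^ n) ⊓ Vp) := by
  have hmem : ∀ x : V, x ∈ range (D ^ n) ⊓ Vp → D x ∈ range (D ^ (n + 1)) ⊓ Vm := by
    rintro x ⟨⟨z, rfl⟩, hxp⟩
    refine ⟨⟨z, ?_⟩, hp _ hxp⟩
    rw [pow_succ', Module.End.mul_apply]
  set f : ↥(range (D ^ n) ⊓ Vp) →ₗ[𝕜] ↥(range (D ^ (n + 1)) ⊓ Vm) := D.restrict hmem with hf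
  have hsurj : Function.Surjective f := by
    rintro ⟨y, ⟨z, rfl⟩, hym⟩
    obtain ⟨zp, zm, hzsum, -⟩ := Submodule.existsUnique_add_of_isCompl hV z
    have hy : (D ^ (n + 1)) z = D ((D ^ n) (zp : V)) + D ((D ^ n) (zm : V)) := by
      rw [← map_add, ← map_add, hzsum, pow_succ', Module.End.mul_apply]
    rcases aux_pow_grading D Vp Vm hp hm n with ⟨h1, h2⟩ | ⟨h1, h2⟩
    · -- D^n preserves parity; the Vp-part of the preimage is `D^n zp`
      have hxp : (D ^ n) (zp : V) ∈ Vp := h1 _ zp.2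
      have hxm : (D ^ n) (zm : V) ∈ Vm := h2 _ zm.2
      have hz : D ((D ^ n) (zm : V)) ∈ Vp ⊓ Vm := by
        refine ⟨hm _ hxm, ?_⟩
        have : D ((D ^ n) (zm : V)) = (D ^ (n + 1)) z - D ((D ^ n) (zp : V)) := by
          rw [hy]; abel
        rw [this]
        exact Submodule.sub_mem _ hym (hp _ hxp)
      have hz0 : D ((D ^ n) (zm : V)) = 0 := by
        have := hV.inf_eq_bot ▸ hz
        simpa using this
      refine ⟨⟨(D ^ n) (zp : V), ⟨zp, rfl⟩, hxp⟩, ?_⟩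
      apply Subtype.ext
      show D ((D ^ n) (zp : V)) = (D ^ (n + 1)) z
      rw [hy, hz0, add_zero]
    · have hxp : (D ^ n) (zm : V) ∈ Vp := h2 _ zm.2
      have hxm : (D ^ n) (zp : V) ∈ Vm := h1 _ zp.2
      have hz : D ((D ^ n) (zp : V)) ∈ Vp ⊓ Vm := by
        refine ⟨hm _ hxm, ?_⟩
        have : D ((D ^ n) (zp : V)) = (D ^ (n + 1)) z - D ((D ^ n) (zm : V)) := by
          rw [hy]; abel
        rw [this]
        exact Submodule.sub_mem _ hym (hp _ hxp)
      have hz0 : D ((D ^ n) (zp : V)) = 0 := by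
        have := hV.inf_eq_bot ▸ hz
        simpa using this
      refine ⟨⟨(D ^ n) (zm : V), ⟨zm, rfl⟩, hxp⟩, ?_⟩
      apply Subtype.ext
      show D ((D ^ n) (zm : V)) = (D ^ (n + 1)) z
      rw [hy, hz0, zero_add]
  have hrange : range f = ⊤ := range_eq_top.mpr hsurj
  have h1 : finrank 𝕜 ↥(range f) = finrank 𝕜 ↥(range (D ^ (n + 1)) ⊓ Vm) := by
    rw [hrange]; exact finrank_top _ _
  have hker : ker f = ((range (D ^ n) ⊓ ker D) ⊓ Vp).comap (range (D ^ n) ⊓ Vp).subtype := by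
    rw [hf, ker_restrict hmem]
    ext x
    simp only [Submodule.mem_comap, mem_ker, Submodule.mem_inf]
    exact ⟨fun h => ⟨⟨x.2.1, h⟩, x.2.2⟩, fun h => h.1.2⟩
  have h2 : finrank 𝕜 ↥(ker f) = finrank 𝕜 ↥((range (D ^ n) ⊓ ker D) ⊓ Vp) := by
    rw [hker]
    exact LinearEquiv.finrank_eq
      (Submodule.comapSubtypeEquivOfLe (inf_le_inf_right Vp (inf_le_left)))
  have := f.finrank_range_add_finrank_ker
  rw [h1, h2] at this
  omega

/-- The range of powers of `D` stabilizes, with `D` injective on the stable range. -/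
lemma aux_stab [FiniteDimensional 𝕜 V] (D : Module.End 𝕜 V) :
    ∃ N : ℕ, (∀ n, N ≤ n → range (D ^ n) = range (D ^ N)) ∧
      range (D ^ N) ⊓ ker D = ⊥ := by
  have hle : ∀ n : ℕ, range (D ^ (n + 1)) ≤ range (D ^ n) := by
    intro n
    rw [pow_succ]
    exact range_comp_le_range _ _
  have hmap : ∀ n : ℕ, range (D ^ (n + 1)) = Submodule.map D (range (D ^ n)) := by
    intro n
    rw [pow_succ', Module.End.mul_eq_comp, range_comp]
  -- choose N with minimal rank
  obtain ⟨N, hN⟩ : ∃ N : ℕ, ∀ n : ℕ, finrank 𝕜 ↥(range (D ^ N)) ≤ finrank 𝕜 ↥(range (D ^ n)) := by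
    have hne : (Set.range fun n : ℕ => finrank 𝕜 ↥(range (D ^ n))).Nonempty := ⟨_, 0, rfl⟩
    obtain ⟨N, hNeq⟩ := Nat.sInf_mem hne
    refine ⟨N, fun n => ?_⟩
    have h2 : finrank 𝕜 ↥(range (D ^ N))
        = sInf (Set.range fun n : ℕ => finrank 𝕜 ↥(range (D ^ n))) := hNeq
    rw [h2]
    exact Nat.sInf_le ⟨n, rfl⟩
  have hstep : range (D ^ (N + 1)) = range (D ^ N) :=
    Submodule.eq_of_le_of_finrank_le (hle N) (hN (N + 1))
  have hstab : ∀ n, N ≤ n → range (D ^ n) = range (D ^ N) := by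
    intro n hn
    induction n, hn using Nat.le_induction with
    | base => rfl
    | succ n hn ih => rw [hmap n, ih, ← hmap N, hstep]
  refine ⟨N, hstab, ?_⟩
  -- D restricted to the stable range is surjective, hence injective
  have hmem : ∀ x : V, x ∈ range (D ^ N) → D x ∈ range (D ^ N) := by
    intro x hx
    rw [← hstep, hmap]
    exact Submodule.mem_map_of_mem hx
  set g : ↥(range (D ^ N)) →ₗ[𝕜] ↥(range (D ^ N)) := D.restrict hmem with hg
  have hsurj : Function.Surjective g := by
    rintro ⟨y, hy⟩
    have : y ∈ Submodule.map D (range (D ^ N)) := by rw [← hmap, hstep]; exact hy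
    obtain ⟨x, hx, hxy⟩ := this
    exact ⟨⟨x, hx⟩, Subtype.ext hxy⟩
  have hinj : Function.Injective g := injective_iff_surjective.mpr hsurj
  rw [eq_bot_iff]
  rintro x ⟨hx1, hx2⟩
  have : g ⟨x, hx1⟩ = 0 := by
    apply Subtype.ext
    rw [hg, restrict_coe_apply]
    simpa using hx2
  have := hinj (by rw [this, map_zero] : g ⟨x, hx1⟩ = g 0)
  simpa using congrArg Subtype.val this

/-- The higher Dirac index of an odd endomorphism equals `dim V⁺ − dim V⁻`. -/
lemma diracIndex_eq_sub [FiniteDimensional 𝕜 V] (D : Module.End 𝕜 V) (Vp Vm : Submodule 𝕜 V)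
    (hV : IsCompl Vp Vm) (hp : ∀ x ∈ Vp, D x ∈ Vm) (hm : ∀ x ∈ Vm, D x ∈ Vp) :
    diracIndex 𝕜 D Vp Vm = (finrank 𝕜 ↥Vp : ℤ) - finrank 𝕜 ↥Vm := by
  obtain ⟨N, hstab, hbot⟩ := aux_stab D
  set g : ℕ → ℤ := fun n =>
    (finrank 𝕜 ↥(range (D ^ n) ⊓ Vp) : ℤ) - finrank 𝕜 ↥(range (D ^ n) ⊓ Vm) with hgdef
  set t : ℕ → ℤ := fun k =>
    (((finrank 𝕜 ↥((range (D ^ (2 * k)) ⊓ ker D) ⊓ Vp) : ℤ) -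
        finrank 𝕜 ↥((range (D ^ (2 * k + 1)) ⊓ ker D) ⊓ Vp)) -
      ((finrank 𝕜 ↥((range (D ^ (2 * k)) ⊓ ker D) ⊓ Vm) : ℤ) -
        finrank 𝕜 ↥((range (D ^ (2 * k + 1)) ⊓ ker D) ⊓ Vm))) with htdef
  have hstepP : ∀ n : ℕ,
      (finrank 𝕜 ↥((range (D ^ n) ⊓ ker D) ⊓ Vp) : ℤ)
        = (finrank 𝕜 ↥(range (D ^ n) ⊓ Vp) : ℤ) - finrank 𝕜 ↥(range (D ^ (n + 1)) ⊓ Vm) := by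
    intro n
    have := aux_rank_step D Vp Vm hV hp hm n
    push_cast [← this]
    ring
  have hstepM : ∀ n : ℕ,
      (finrank 𝕜 ↥((range (D ^ n) ⊓ ker D) ⊓ Vm) : ℤ)
        = (finrank 𝕜 ↥(range (D ^ n) ⊓ Vm) : ℤ) - finrank 𝕜 ↥(range (D ^ (n + 1)) ⊓ Vp) := by
    intro n
    have := aux_rank_step D Vm Vp hV.symm hm hp n
    push_cast [← this]
    ring
  have ht : ∀ k : ℕ, t k = g (2 * k) - g (2 * (k + 1)) := by
    intro k
    have e1 := hstepP (2 * k)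
    have e2 := hstepP (2 * k + 1)
    have e3 := hstepM (2 * k)
    have e4 := hstepM (2 * k + 1)
    have h22 : 2 * k + 1 + 1 = 2 * (k + 1) := by ring
    rw [h22] at e2 e4
    simp only [htdef, hgdef, e1, e2, e3, e4]
    ring
  have hg_stab : ∀ n, N ≤ n → g n = g N := by
    intro n hn
    simp only [hgdef]
    rw [hstab n hn]
  have hgN : g N = 0 := by
    -- finrank (range (D^N) ⊓ Vp) = finrank (range (D^(N+1)) ⊓ Vm) = finrank (range (D^N) ⊓ Vm)
    have h0 : ((range (D ^ N) ⊓ ker D) ⊓ Vp) = ⊥ := by rw [hbot, bot_inf_eq]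
    have := hstepP N
    rw [h0, hstab (N + 1) (Nat.le_succ N)] at this
    simp only [finrank_bot] at this
    simp only [hgdef]
    omega
  have hzero : ∀ k, N ≤ k → t k = 0 := by
    intro k hk
    rw [ht k, hg_stab (2 * k) (by omega), hg_stab (2 * (k + 1)) (by omega), sub_self]
  have hsupp : Function.support t ⊆ (Finset.range N : Finset ℕ) := by
    intro k hk
    simp only [Finset.coe_range, Set.mem_Iio]
    by_contra h
    exact hk (hzero k (by omega))
  have hsum : diracIndex 𝕜 D Vp Vm = ∑ k ∈ Finset.range N, t k := by
    exact finsum_eq_sum_of_support_subset t hsupp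
  have htele : ∑ k ∈ Finset.range N, t k = g 0 - g (2 * N) := by
    have := Finset.sum_range_sub' (fun k => g (2 * k)) N
    rw [← this]
    exact Finset.sum_congr rfl fun k _ => ht k
  have hg0 : g 0 = (finrank 𝕜 ↥Vp : ℤ) - finrank 𝕜 ↥Vm := by
    have : range (D ^ 0) = ⊤ := by
      rw [pow_zero]
      exact range_eq_top.mpr fun x => ⟨x, rfl⟩
    simp only [hgdef]
    rw [this, top_inf_eq, top_inf_eq]
  rw [hsum, htele, hg0, hg_stab (2 * N) (by omega), hgN, sub_zero]

end Aux

section SES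

variable {𝕜 U V W : Type*} [Field 𝕜]
  [AddCommGroup U] [Module 𝕜 U] [FiniteDimensional 𝕜 U]
  [AddCommGroup V] [Module 𝕜 V] [FiniteDimensional 𝕜 V]
  [AddCommGroup W] [Module 𝕜 W] [FiniteDimensional 𝕜 W]

/-- Graded dimensions are additive in short exact sequences of graded spaces. -/
lemma aux_finrank_ses (ι : U →ₗ[𝕜] V) (p : V →ₗ[𝕜] W)
    (hinj : Function.Injective ι) (hsurj : Function.Surjective p)
    (hexact : range ι = ker p)
    (Up Um : Submodule 𝕜 U) (Vp Vm : Submodule 𝕜 V) (Wp Wm : Submodule 𝕜 W)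
    (hU : IsCompl Up Um) (hV : IsCompl Vp Vm) (hW : IsCompl Wp Wm)
    (hιp : ∀ x ∈ Up, ι x ∈ Vp) (hιm : ∀ x ∈ Um, ι x ∈ Vm)
    (hpp : ∀ x ∈ Vp, p x ∈ Wp) (hpm : ∀ x ∈ Vm, p x ∈ Wm) :
    finrank 𝕜 ↥Vp = finrank 𝕜 ↥Up + finrank 𝕜 ↥Wp := by
  set ι' : ↥Up →ₗ[𝕜] ↥Vp := ι.restrict (fun x hx => hιp x hx) with hι'
  set p' : ↥Vp →ₗ[𝕜] ↥Wp := p.restrict (fun x hx => hpp x hx) with hp'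
  have hι'inj : Function.Injective ι' := by
    intro x y hxy
    apply Subtype.ext
    apply hinj
    exact congrArg Subtype.val hxy
  have hp'surj : Function.Surjective p' := by
    rintro ⟨w, hw⟩
    obtain ⟨v, hv⟩ := hsurj w
    obtain ⟨vp, vm, hvsum, -⟩ := Submodule.existsUnique_add_of_isCompl hV v
    have hpvm : p (vm : V) ∈ Wp ⊓ Wm := by
      refine ⟨?_, hpm _ vm.2⟩
      have : p (vm : V) = w - p (vp : V) := by
        rw [← hv, ← hvsum, map_add]; abel
      rw [this]
      exact Submodule.sub_mem _ hw (hpp _ vp.2)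
    have hpvm0 : p (vm : V) = 0 := by
      have := hW.inf_eq_bot ▸ hpvm
      simpa using this
    refine ⟨⟨(vp : V), vp.2⟩, ?_⟩
    apply Subtype.ext
    show p (vp : V) = w
    have : p (vp : V) + p (vm : V) = w := by rw [← map_add, hvsum, hv]
    rw [hpvm0, add_zero] at this
    exact this
  have hexact' : range ι' = ker p' := by
    ext x
    constructor
    · rintro ⟨u, rfl⟩
      have h0 : p (ι (u : U)) = 0 := by
        rw [← mem_ker, ← hexact]; exact ⟨(u : U), rfl⟩
      rw [mem_ker]
      apply Subtype.ext
      show p (ι (u : U)) = 0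
      exact h0
    · intro hx
      have hx0 : p (x : V) = 0 := by
        have h := congrArg Subtype.val (mem_ker.mp hx)
        rw [hp', restrict_coe_apply] at h
        simpa using h
      have : (x : V) ∈ range ι := by rw [hexact]; exact hx0
      obtain ⟨u, hu⟩ := this
      obtain ⟨up, um, husum, -⟩ := Submodule.existsUnique_add_of_isCompl hU u
      have hιum : ι (um : U) ∈ Vp ⊓ Vm := by
        refine ⟨?_, hιm _ um.2⟩
        have : ι (um : U) = (x : V) - ι (up : U) := by
          rw [← hu, ← husum, map_add]; abel
        rw [this]
        exact Submodule.sub_mem _ x.2 (hιp _ up.2)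
      have hιum0 : ι (um : U) = 0 := by
        have := hV.inf_eq_bot ▸ hιum
        simpa using this
      refine ⟨up, ?_⟩
      apply Subtype.ext
      show ι (up : U) = (x : V)
      have : ι (up : U) + ι (um : U) = (x : V) := by rw [← map_add, husum, hu]
      rw [hιum0, add_zero] at this
      exact this
  have h1 := p'.finrank_range_add_finrank_ker
  have h2 : finrank 𝕜 ↥(range p') = finrank 𝕜 ↥Wp := by
    rw [range_eq_top.mpr hp'surj]; exact finrank_top _ _
  have h3 : finrank 𝕜 ↥(ker p') = finrank 𝕜 ↥Up := by
    rw [← hexact', finrank_range_of_inj hι'inj]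
  omega

end SES

/-- Corollary 3.7. Given a short exact sequence
`0 → U → V → W → 0` of finite-dimensional ℤ/2-graded vector spaces with
grading-preserving maps and compatible odd endomorphisms, the higher Dirac
index is additive: `I(V) = I(U) + I(W)`. -/
theorem stmt6 {𝕜 U V W : Type*} [Field 𝕜]
    [AddCommGroup U] [Module 𝕜 U] [FiniteDimensional 𝕜 U]
    [AddCommGroup V] [Module 𝕜 V] [FiniteDimensional 𝕜 V]
    [AddCommGroup W] [Module 𝕜 W] [FiniteDimensional 𝕜 W]
    (ι : U →ₗ[𝕜] V) (p : V →ₗ[𝕜] W)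
    (hinj : Function.Injective ι) (hsurj : Function.Surjective p)
    (hexact : range ι = ker p)
    (Up Um : Submodule 𝕜 U) (Vp Vm : Submodule 𝕜 V) (Wp Wm : Submodule 𝕜 W)
    (hU : IsCompl Up Um) (hV : IsCompl Vp Vm) (hW : IsCompl Wp Wm)
    (hιp : ∀ x ∈ Up, ι x ∈ Vp) (hιm : ∀ x ∈ Um, ι x ∈ Vm)
    (hpp : ∀ x ∈ Vp, p x ∈ Wp) (hpm : ∀ x ∈ Vm, p x ∈ Wm)
    (DU : Module.End 𝕜 U) (DV : Module.End 𝕜 V) (DW : Module.End 𝕜 W)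
    (hDUp : ∀ x ∈ Up, DU x ∈ Um) (hDUm : ∀ x ∈ Um, DU x ∈ Up)
    (hDVp : ∀ x ∈ Vp, DV x ∈ Vm) (hDVm : ∀ x ∈ Vm, DV x ∈ Vp)
    (hDWp : ∀ x ∈ Wp, DW x ∈ Wm) (hDWm : ∀ x ∈ Wm, DW x ∈ Wp)
    (hιD : ι ∘ₗ DU = DV ∘ₗ ι) (hpD : p ∘ₗ DV = DW ∘ₗ p) :
    diracIndex 𝕜 DV Vp Vm = diracIndex 𝕜 DU Up Um + diracIndex 𝕜 DW Wp Wm := by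
  rw [diracIndex_eq_sub DV Vp Vm hV hDVp hDVm,
    diracIndex_eq_sub DU Up Um hU hDUp hDUm,
    diracIndex_eq_sub DW Wp Wm hW hDWp hDWm]
  have hplus := aux_finrank_ses ι p hinj hsurj hexact Up Um Vp Vm Wp Wm hU hV hW
    hιp hιm hpp hpm
  have hminus := aux_finrank_ses ι p hinj hsurj hexact Um Up Vm Vp Wm Wp hU.symm hV.symm hW.symm
    hιm hιp hpm hpp
  rw [hplus, hminus]
  push_cast
  ring
end

section
/- Let H₁, H₂, H₃ be finite-dimensional vector spaces over a field. Then there exist linear maps f : H₁ → H₂, g : H₂ → H₃, h : H₃ → H₁ forming an exact triangle (i.e. range f = ker g, range g = ker h, range h = ker f) if and only if: (1) dim H₁ + dim H₂ + dim H₃ is even, and (2) the three dimensions satisfy the triangle inequalities dim H₁ ≤ dim H₂ + dim H₃, dim H₂ ≤ dim H₁ + dim H₃, and dim H₃ ≤ dim H₁ + dim H₂. (Corollary 4.2.) -/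
open LinearMap Module

/-- Auxiliary: the standard "shift" maps on products form an exact pair. -/
lemma aux_exact {𝕜 : Type*} [Field 𝕜] (a b c : ℕ) :
    range ((inl 𝕜 (Fin a → 𝕜) (Fin b → 𝕜)).comp (snd 𝕜 (Fin c → 𝕜) (Fin a → 𝕜))) =
    ker ((inl 𝕜 (Fin b → 𝕜) (Fin c → 𝕜)).comp (snd 𝕜 (Fin a → 𝕜) (Fin b → 𝕜))) := by
  ext ⟨x, y⟩
  simp [Prod.ext_iff, eq_comm]

/-- Auxiliary: conjugating an exact pair by linear equivalences preserves exactness. -/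
lemma aux_conj {𝕜 A B C H₁ H₂ H₃ : Type*} [Field 𝕜]
    [AddCommGroup A] [Module 𝕜 A] [AddCommGroup B] [Module 𝕜 B]
    [AddCommGroup C] [Module 𝕜 C]
    [AddCommGroup H₁] [Module 𝕜 H₁] [AddCommGroup H₂] [Module 𝕜 H₂]
    [AddCommGroup H₃] [Module 𝕜 H₃]
    (φ : A →ₗ[𝕜] B) (ψ : B →ₗ[𝕜] C)
    (e₁ : A ≃ₗ[𝕜] H₁) (e₂ : B ≃ₗ[𝕜] H₂) (e₃ : C ≃ₗ[𝕜] H₃)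
    (hexact : range φ = ker ψ) :
    range (e₂.toLinearMap.comp (φ.comp e₁.symm.toLinearMap)) =
    ker (e₃.toLinearMap.comp (ψ.comp e₂.symm.toLinearMap)) := by
  rw [LinearMap.range_comp, LinearMap.range_comp, LinearEquiv.range, Submodule.map_top,
      hexact, LinearMap.ker_comp, Submodule.comap_comp, LinearEquiv.ker, Submodule.comap_bot,
      Submodule.map_equiv_eq_comap_symm]

/-- Corollary 4.2. Finite-dimensional vector spaces `H₁, H₂, H₃`
admit an exact triangle `f : H₁ → H₂`, `g : H₂ → H₃`, `h : H₃ → H₁`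
(`range f = ker g`, `range g = ker h`, `range h = ker f`) if and only if
`dim H₁ + dim H₂ + dim H₃` is even and the three dimensions satisfy the
triangle inequalities. -/
theorem stmt8 {𝕜 H₁ H₂ H₃ : Type*} [Field 𝕜]
    [AddCommGroup H₁] [Module 𝕜 H₁] [FiniteDimensional 𝕜 H₁]
    [AddCommGroup H₂] [Module 𝕜 H₂] [FiniteDimensional 𝕜 H₂]
    [AddCommGroup H₃] [Module 𝕜 H₃] [FiniteDimensional 𝕜 H₃] :
    (∃ (f : H₁ →ₗ[𝕜] H₂) (g : H₂ →ₗ[𝕜] H₃) (h : H₃ →ₗ[𝕜] H₁),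
        range f = ker g ∧ range g = ker h ∧ range h = ker f) ↔
      (Even (finrank 𝕜 H₁ + finrank 𝕜 H₂ + finrank 𝕜 H₃) ∧
        finrank 𝕜 H₁ ≤ finrank 𝕜 H₂ + finrank 𝕜 H₃ ∧
        finrank 𝕜 H₂ ≤ finrank 𝕜 H₁ + finrank 𝕜 H₃ ∧
        finrank 𝕜 H₃ ≤ finrank 𝕜 H₁ + finrank 𝕜 H₂) := by
  constructor
  · rintro ⟨f, g, h, hfg, hgh, hhf⟩
    have r1 := f.finrank_range_add_finrank_ker
    have r2 := g.finrank_range_add_finrank_ker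
    have r3 := h.finrank_range_add_finrank_ker
    rw [← hhf] at r1
    rw [← hfg] at r2
    rw [← hgh] at r3
    refine ⟨⟨finrank 𝕜 (range f) + finrank 𝕜 (range g) + finrank 𝕜 (range h), by omega⟩,
      by omega, by omega, by omega⟩
  · rintro ⟨⟨k, hk⟩, h1, h2, h3⟩
    set d₁ := finrank 𝕜 H₁ with hd1
    set d₂ := finrank 𝕜 H₂ with hd2
    set d₃ := finrank 𝕜 H₃ with hd3
    obtain ⟨a, b, c, ha, hb, hc⟩ : ∃ a b c : ℕ, c + a = d₁ ∧ a + b = d₂ ∧ b + c = d₃ :=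
      ⟨(d₁ + d₂ - d₃) / 2, (d₂ + d₃ - d₁) / 2, (d₃ + d₁ - d₂) / 2, by omega, by omega, by omega⟩
    obtain ⟨e₁⟩ := FiniteDimensional.nonempty_linearEquiv_of_finrank_eq
      (show finrank 𝕜 ((Fin c → 𝕜) × (Fin a → 𝕜)) = finrank 𝕜 H₁ by
        simp [Module.finrank_prod]; omega)
    obtain ⟨e₂⟩ := FiniteDimensional.nonempty_linearEquiv_of_finrank_eq
      (show finrank 𝕜 ((Fin a → 𝕜) × (Fin b → 𝕜)) = finrank 𝕜 H₂ by
        simp [Module.finrank_prod]; omega)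
    obtain ⟨e₃⟩ := FiniteDimensional.nonempty_linearEquiv_of_finrank_eq
      (show finrank 𝕜 ((Fin b → 𝕜) × (Fin c → 𝕜)) = finrank 𝕜 H₃ by
        simp [Module.finrank_prod]; omega)
    refine ⟨e₂.toLinearMap.comp (((inl 𝕜 (Fin a → 𝕜) (Fin b → 𝕜)).comp
        (snd 𝕜 (Fin c → 𝕜) (Fin a → 𝕜))).comp e₁.symm.toLinearMap),
      e₃.toLinearMap.comp (((inl 𝕜 (Fin b → 𝕜) (Fin c → 𝕜)).comp
        (snd 𝕜 (Fin a → 𝕜) (Fin b → 𝕜))).comp e₂.symm.toLinearMap),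
      e₁.toLinearMap.comp (((inl 𝕜 (Fin c → 𝕜) (Fin a → 𝕜)).comp
        (snd 𝕜 (Fin b → 𝕜) (Fin c → 𝕜))).comp e₃.symm.toLinearMap),
      aux_conj _ _ e₁ e₂ e₃ (aux_exact a b c),
      aux_conj _ _ e₂ e₃ e₁ (aux_exact b c a),
      aux_conj _ _ e₃ e₁ e₂ (aux_exact c a b)⟩
end

section
/- Let V be an m-dimensional vector space over a field, let D be an endomorphism with D^m = 0, and let v ∈ V satisfy D^{m−1}v ≠ 0 (so V is a single Jordan block of size m for D, with basis e_j := D^{m−j}v for 1 ≤ j ≤ m, satisfying D e_1 = 0 and D e_j = e_{j−1}). Let N ≥ m be an integer and let 1 ≤ i ≤ N−1. Then for each 1 ≤ j ≤ m: e_j ∈ ker(D^i) and e_j ∉ range(D^{N−i}) if and only if j ≤ i and i < j + N − m. (Proposition 5.3: the basis vector e_j contributes to the N-differential cohomology H_D^i = ker(D^i)/range(D^{N−i}) exactly when j ≤ i < j + N − m.) -/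
open LinearMap Module

/-- Proposition 5.3. Let `V` be an `m`-dimensional space,
`D^m = 0`, and `v` with `D^{m−1} v ≠ 0`, so `V` is a single Jordan block with basis
`e_j = D^{m−j} v`, `1 ≤ j ≤ m`. Let `N ≥ m` and `1 ≤ i ≤ N−1`. Then for `1 ≤ j ≤ m`:
`e_j ∈ ker D^i` and `e_j ∉ range D^{N−i}` iff `j ≤ i` and `i < j + N − m`. -/
theorem stmt10 {𝕜 V : Type*} [Field 𝕜] [AddCommGroup V] [Module 𝕜 V] [FiniteDimensional 𝕜 V]
    (m : ℕ) (hdim : finrank 𝕜 V = m) (D : Module.End 𝕜 V) (hDm : D ^ m = 0)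
    (v : V) (hv : (D ^ (m - 1)) v ≠ 0)
    (N i j : ℕ) (hN : m ≤ N) (hi1 : 1 ≤ i) (hi2 : i ≤ N - 1) (hj1 : 1 ≤ j) (hj2 : j ≤ m) :
    ((D ^ (m - j)) v ∈ ker (D ^ i) ∧ (D ^ (m - j)) v ∉ range (D ^ (N - i))) ↔
      (j ≤ i ∧ i < j + N - m) := by
  have key : ∀ a b : ℕ, (D ^ a) ((D ^ b) v) = (D ^ (a + b)) v := fun a b => by
    rw [pow_add, Module.End.mul_apply]
  have hDk : ∀ k, m ≤ k → (D ^ k : Module.End 𝕜 V) = 0 := by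
    intro k hk
    have h : D ^ k = D ^ (k - m) * D ^ m := by rw [← pow_add]; congr 1; omega
    rw [h, hDm, mul_zero]
  have hvk : ∀ k, k < m → (D ^ k) v ≠ 0 := by
    intro k hk h
    apply hv
    have h2 : D ^ (m - 1) = D ^ (m - 1 - k) * D ^ k := by rw [← pow_add]; congr 1; omega
    rw [h2, Module.End.mul_apply, h, map_zero]
  constructor
  · rintro ⟨hker, hrange⟩
    constructor
    · by_contra hji
      push_neg at hji
      have h0 : (D ^ i) ((D ^ (m - j)) v) = 0 := hker
      rw [key] at h0
      exact hvk _ (by omega) h0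
    · by_contra hlt
      push_neg at hlt
      apply hrange
      refine ⟨(D ^ (m - j - (N - i))) v, ?_⟩
      rw [key]
      have he : N - i + (m - j - (N - i)) = m - j := by omega
      rw [he]
  · rintro ⟨hji, hlt⟩
    constructor
    · show (D ^ i) ((D ^ (m - j)) v) = 0
      rw [key, hDk _ (by omega)]
      rfl
    · rintro ⟨w, hw⟩
      apply hv
      have h1 : (D ^ (j - 1)) ((D ^ (m - j)) v) = (D ^ (m - 1)) v := by
        rw [key]
        have he : j - 1 + (m - j) = m - 1 := by omega
        rw [he]
      rw [← h1, ← hw, ← Module.End.mul_apply, ← pow_add, hDk _ (by omega)]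
      rfl
end

section
/- Let V be a finite-dimensional vector space over a field, let N ≥ 1 be an integer, and let D be an endomorphism of V with D^{2N} = 0. Then, as an equality of integers, Σ_{k≥0} dim H^k(V,D) = Σ_{i=1}^{2N−1} (−1)^{i−1} ( dim ker(D^i) − dim range(D^{2N−i}) ), where the left-hand sum has only finitely many nonzero terms. (Proposition 5.5: the total higher Dirac cohomology equals the alternating sum of the N-differential cohomologies H_D^i = ker(D^i)/range(D^{2N−i}) in the Grothendieck group; here stated in dimension form, noting dim(ker(D^i)/range(D^{2N−i})) = dim ker(D^i) − dim range(D^{2N−i}) since range(D^{2N−i}) ⊆ ker(D^i).) -/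
open LinearMap Module

/-- Pure arithmetic key lemma. -/
private lemma key_sum (g : ℕ → ℤ) (hg0 : g 0 = 0) :
    ∀ N : ℕ, 1 ≤ N →
      ∑ k ∈ Finset.range N, (2 * g (2 * k + 1) - g (2 * k) - g (2 * k + 2)) =
      2 * ∑ i ∈ Finset.Icc 1 (2 * N - 1), (-1 : ℤ) ^ (i - 1) * g i - g (2 * N) := by
  intro N
  induction N with
  | zero => omega
  | succ n ih =>
    intro _
    rcases Nat.eq_or_lt_of_le (Nat.one_le_iff_ne_zero.mpr (Nat.succ_ne_zero n)) with h | h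
    · -- N = 1
      have hn : n = 0 := by omega
      subst hn
      simp [hg0]
      try ring
    · have hn : 1 ≤ n := by omega
      have h1 : 2 * (n + 1) - 1 = (2 * n - 1 + 1) + 1 := by omega
      have h2 : 2 * n - 1 + 1 = 2 * n := by omega
      have h3 : 2 * n - 1 + 1 + 1 = 2 * n + 1 := by omega
      rw [Finset.sum_range_succ, ih hn, h1,
        Finset.sum_Icc_succ_top (by omega), Finset.sum_Icc_succ_top (by omega), h3, h2]
      have e1 : (-1 : ℤ) ^ (2 * n - 1) = -1 := by
        have : 2 * n - 1 = 2 * (n - 1) + 1 := by omega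
        rw [this, pow_succ, pow_mul]; simp
      have e2 : (-1 : ℤ) ^ (2 * n + 1 - 1) = 1 := by
        have : 2 * n + 1 - 1 = 2 * n := by omega
        rw [this, pow_mul]; simp
      rw [e1, e2]
      have h4 : 2 * (n + 1) = 2 * n + 2 := by omega
      rw [h4]
      ring

private lemma stmt13_sign_sum : ∀ N : ℕ, 1 ≤ N →
    ∑ i ∈ Finset.Icc 1 (2 * N - 1), (-1 : ℤ) ^ (i - 1) = 1 := by
  intro N
  induction N with
  | zero => omega
  | succ n ih =>
    intro _
    rcases Nat.lt_or_ge n 1 with h | hn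
    · have hn : n = 0 := by omega
      subst hn; simp
    · have h1 : 2 * (n + 1) - 1 = (2 * n - 1 + 1) + 1 := by omega
      have h2 : 2 * n - 1 + 1 = 2 * n := by omega
      have h3 : 2 * n - 1 + 1 + 1 = 2 * n + 1 := by omega
      rw [h1, Finset.sum_Icc_succ_top (by omega), Finset.sum_Icc_succ_top (by omega), h3, h2,
        ih hn]
      have e1 : (-1 : ℤ) ^ (2 * n - 1) = -1 := by
        have : 2 * n - 1 = 2 * (n - 1) + 1 := by omega
        rw [this, pow_succ, pow_mul]; simp
      have e2 : (-1 : ℤ) ^ (2 * n + 1 - 1) = 1 := by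
        have : 2 * n + 1 - 1 = 2 * n := by omega
        rw [this, pow_mul]; simp
      rw [e1, e2]; ring

/-- dim (range D^j ⊓ ker D) + dim ker D^j = dim ker D^{j+1}. -/
private lemma dim_step_s13 {𝕜 V : Type*} [Field 𝕜] [AddCommGroup V] [Module 𝕜 V]
    [FiniteDimensional 𝕜 V] (D : Module.End 𝕜 V) (j : ℕ) :
    (finrank 𝕜 ↥(range (D ^ j) ⊓ ker D) : ℤ) + finrank 𝕜 ↥(ker (D ^ j)) =
      finrank 𝕜 ↥(ker (D ^ (j + 1))) := by
  set ψ := (D ^ j).domRestrict (ker (D ^ (j + 1)))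
  have hrange : range ψ = range (D ^ j) ⊓ ker D := by
    rw [LinearMap.range_domRestrict]
    ext x
    constructor
    · rintro ⟨y, hy, rfl⟩
      refine ⟨⟨y, rfl⟩, ?_⟩
      have : (D ^ (j + 1)) y = D ((D ^ j) y) := by
        rw [pow_succ']; rfl
      simpa [LinearMap.mem_ker, ← this] using hy
    · rintro ⟨⟨y, rfl⟩, hx⟩
      refine ⟨y, ?_, rfl⟩
      have : (D ^ (j + 1)) y = D ((D ^ j) y) := by
        rw [pow_succ']; rfl
      simpa [LinearMap.mem_ker, this] using hx
  have hker : ker ψ = (ker (D ^ j)).comap (ker (D ^ (j + 1))).subtype :=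
    LinearMap.ker_domRestrict _ _
  have hle : ker (D ^ j) ≤ ker (D ^ (j + 1)) := by
    intro x hx
    have : (D ^ (j + 1)) x = D ((D ^ j) x) := by rw [pow_succ']; rfl
    simp only [LinearMap.mem_ker] at hx ⊢
    rw [this, hx, map_zero]
  have hkerrank : finrank 𝕜 ↥(ker ψ) = finrank 𝕜 ↥(ker (D ^ j)) := by
    rw [hker]
    exact (Submodule.comapSubtypeEquivOfLe hle).finrank_eq
  have h := LinearMap.finrank_range_add_finrank_ker ψ
  rw [hrange, hkerrank] at h
  exact_mod_cast h

/-- Proposition 5.5, dimension form. If `D^{2N} = 0` on the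
finite-dimensional space `V` (`N ≥ 1`), then the total dimension of the higher
Dirac cohomology `Σ_{k≥0} dim H^k(V,D)` (with
`dim H^k(V,D) = dim(range D^{2k} ⊓ ker D) − dim(range D^{2k+1} ⊓ ker D)`) equals
the alternating sum `Σ_{i=1}^{2N−1} (−1)^{i−1} (dim ker D^i − dim range D^{2N−i})`. -/
theorem stmt13 {𝕜 V : Type*} [Field 𝕜] [AddCommGroup V] [Module 𝕜 V] [FiniteDimensional 𝕜 V]
    (D : Module.End 𝕜 V) (N : ℕ) (hN : 1 ≤ N) (hD : D ^ (2 * N) = 0) :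
    ∑ᶠ k : ℕ,
      ((finrank 𝕜 ↥(range (D ^ (2 * k)) ⊓ ker D) : ℤ) -
        finrank 𝕜 ↥(range (D ^ (2 * k + 1)) ⊓ ker D)) =
    ∑ i ∈ Finset.Icc 1 (2 * N - 1),
      (-1 : ℤ) ^ (i - 1) *
        ((finrank 𝕜 ↥(ker (D ^ i)) : ℤ) - finrank 𝕜 ↥(range (D ^ (2 * N - i)))) := by
  set g : ℕ → ℤ := fun j => (finrank 𝕜 ↥(ker (D ^ j)) : ℤ) with hg
  set n : ℤ := (finrank 𝕜 V : ℤ) with hn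
  have hg0 : g 0 = 0 := by
    have h : ker (D ^ 0) = ⊥ := by rw [pow_zero]; exact LinearMap.ker_id
    have h2 : finrank 𝕜 ↥(ker (D ^ 0)) = 0 := by rw [h]; exact finrank_bot 𝕜 V
    simp [hg, h2]
  have hzero : ∀ j, 2 * N ≤ j → D ^ j = 0 := by
    intro j hj
    have : D ^ j = D ^ (2 * N) * D ^ (j - 2 * N) := by
      rw [← pow_add]; congr 1; omega
    rw [this, hD, zero_mul]
  have hgtop : ∀ j, 2 * N ≤ j → g j = n := by
    intro j hj
    have h : ker (D ^ j) = ⊤ := by rw [hzero j hj]; exact LinearMap.ker_zero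
    have h2 : finrank 𝕜 ↥(ker (D ^ j)) = finrank 𝕜 V := by rw [h]; exact finrank_top 𝕜 V
    simp [hg, hn, h2]
  have hstep : ∀ j, (finrank 𝕜 ↥(range (D ^ j) ⊓ ker D) : ℤ) = g (j + 1) - g j := by
    intro j
    have := dim_step_s13 D j
    simp only [hg]
    omega
  have hrg : ∀ i, i ≤ 2 * N - 1 → 1 ≤ i →
      (finrank 𝕜 ↥(range (D ^ (2 * N - i))) : ℤ) = n - g (2 * N - i) := by
    intro i _ _
    have := LinearMap.finrank_range_add_finrank_ker (D ^ (2 * N - i))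
    simp only [hg, hn]
    omega
  -- LHS: finsum to a finite sum
  have hsupp : (Function.support fun k : ℕ =>
      ((finrank 𝕜 ↥(range (D ^ (2 * k)) ⊓ ker D) : ℤ) -
        finrank 𝕜 ↥(range (D ^ (2 * k + 1)) ⊓ ker D))) ⊆ ↑(Finset.range N) := by
    intro k hk
    simp only [Finset.coe_range, Set.mem_Iio]
    by_contra hge
    push_neg at hge
    have h1 : D ^ (2 * k) = 0 := hzero _ (by omega)
    have h2 : D ^ (2 * k + 1) = 0 := hzero _ (by omega)
    apply hk
    have e1 : range (D ^ (2 * k)) ⊓ ker D = ⊥ := by rw [h1, LinearMap.range_zero, bot_inf_eq]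
    have e2 : range (D ^ (2 * k + 1)) ⊓ ker D = ⊥ := by
      rw [h2, LinearMap.range_zero, bot_inf_eq]
    have f1 : finrank 𝕜 ↥(range (D ^ (2 * k)) ⊓ ker D) = 0 := by rw [e1]; exact finrank_bot 𝕜 V
    have f2 : finrank 𝕜 ↥(range (D ^ (2 * k + 1)) ⊓ ker D) = 0 := by
      rw [e2]; exact finrank_bot 𝕜 V
    simp [f1, f2]
  rw [finsum_eq_sum_of_support_subset _ hsupp]
  have hLHS : ∑ k ∈ Finset.range N,
      ((finrank 𝕜 ↥(range (D ^ (2 * k)) ⊓ ker D) : ℤ) -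
        finrank 𝕜 ↥(range (D ^ (2 * k + 1)) ⊓ ker D)) =
      ∑ k ∈ Finset.range N, (2 * g (2 * k + 1) - g (2 * k) - g (2 * k + 2)) := by
    refine Finset.sum_congr rfl fun k _ => ?_
    rw [hstep, hstep]
    have : 2 * k + 1 + 1 = 2 * k + 2 := by omega
    rw [this]; ring
  rw [hLHS, key_sum g hg0 N hN]
  -- RHS
  have hRHS : ∑ i ∈ Finset.Icc 1 (2 * N - 1),
      (-1 : ℤ) ^ (i - 1) *
        ((finrank 𝕜 ↥(ker (D ^ i)) : ℤ) - finrank 𝕜 ↥(range (D ^ (2 * N - i)))) =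
      ∑ i ∈ Finset.Icc 1 (2 * N - 1),
        ((-1 : ℤ) ^ (i - 1) * g i + (-1) ^ (i - 1) * g (2 * N - i) - (-1) ^ (i - 1) * n) := by
    refine Finset.sum_congr rfl fun i hi => ?_
    simp only [Finset.mem_Icc] at hi
    rw [hrg i hi.2 hi.1]
    simp only [hg]
    ring
  rw [hRHS]
  rw [Finset.sum_sub_distrib, Finset.sum_add_distrib, ← Finset.sum_mul, stmt13_sign_sum N hN, one_mul]
  -- reindex the middle sum
  have hre : ∑ i ∈ Finset.Icc 1 (2 * N - 1), (-1 : ℤ) ^ (i - 1) * g (2 * N - i) =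
      ∑ i ∈ Finset.Icc 1 (2 * N - 1), (-1 : ℤ) ^ (i - 1) * g i := by
    refine Finset.sum_nbij' (fun i => 2 * N - i) (fun i => 2 * N - i) ?_ ?_ ?_ ?_ ?_
    · intro i hi; simp only [Finset.mem_Icc] at hi ⊢; omega
    · intro i hi; simp only [Finset.mem_Icc] at hi ⊢; omega
    · intro i hi; simp only [Finset.mem_Icc] at hi; omega
    · intro i hi; simp only [Finset.mem_Icc] at hi; omega
    · intro i hi
      simp only [Finset.mem_Icc] at hi
      congr 1
      have hsq : (-1 : ℤ) ^ (i - 1) * (-1 : ℤ) ^ (i - 1) = 1 := by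
        rw [← pow_add]
        have : i - 1 + (i - 1) = 2 * (i - 1) := by omega
        rw [this, pow_mul]; simp
      have : (-1 : ℤ) ^ (2 * N - i - 1) =
          (-1 : ℤ) ^ (2 * N - i - 1) * ((-1 : ℤ) ^ (i - 1) * (-1 : ℤ) ^ (i - 1)) := by
        rw [hsq, mul_one]
      rw [this, ← mul_assoc, ← pow_add]
      have h21 : 2 * N - i - 1 + (i - 1) = 2 * (N - 1) := by omega
      rw [h21, pow_mul]; simp
  rw [hre, hgtop (2 * N) le_rfl]
  ring
end

section
/- Let V be a finite-dimensional vector space over a field and let D be an endomorphism of V. Let N, M ≥ 1 be integers with D^{2N} = 0 and D^{2M} = 0. Then Σ_{i=1}^{2N−1} (−1)^{i−1} ( dim ker(D^i) − dim range(D^{2N−i}) ) = Σ_{i=1}^{2M−1} (−1)^{i−1} ( dim ker(D^i) − dim range(D^{2M−i}) ), as integers. (Remark 5.6: the alternating sum of the N-differential cohomologies is stable, i.e. independent of the choice of sufficiently large even exponent 2N.) -/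
open LinearMap Module Finset

private lemma negpow_eq (a b : ℕ) (h : a % 2 = b % 2) : (-1 : ℤ) ^ a = (-1 : ℤ) ^ b := by
  conv_lhs => rw [← Nat.div_add_mod a 2]
  conv_rhs => rw [← Nat.div_add_mod b 2]
  rw [h, pow_add, pow_add, pow_mul, pow_mul]
  norm_num

private lemma sgn_sum (m : ℕ) :
    ∑ i ∈ Finset.Icc 1 m, (-1 : ℤ) ^ (i - 1) = if m % 2 = 1 then 1 else 0 := by
  induction m with
  | zero => simp
  | succ m ih =>
    rw [Finset.sum_Icc_succ_top (by omega), ih]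
    simp only [Nat.add_sub_cancel]
    rcases Nat.even_or_odd m with h | h
    · have h2 : m % 2 = 0 := Nat.even_iff.mp h
      rw [if_neg (by omega), if_pos (by omega), Even.neg_one_pow h]; ring
    · have h2 : m % 2 = 1 := Nat.odd_iff.mp h
      rw [if_pos h2, if_neg (by omega), Odd.neg_one_pow h]; ring

section
variable {𝕜 V : Type*} [Field 𝕜] [AddCommGroup V] [Module 𝕜 V] [FiniteDimensional 𝕜 V]

private lemma refl_sum (D : Module.End 𝕜 V) (N : ℕ) :
    ∑ i ∈ Finset.Icc 1 (2 * N - 1),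
        (-1 : ℤ) ^ (i - 1) * (finrank 𝕜 ↥(ker (D ^ (2 * N - i))) : ℤ) =
    ∑ i ∈ Finset.Icc 1 (2 * N - 1),
        (-1 : ℤ) ^ (i - 1) * (finrank 𝕜 ↥(ker (D ^ i)) : ℤ) := by
  apply Finset.sum_nbij' (fun i => 2 * N - i) (fun i => 2 * N - i)
  · intro a ha; simp only [Finset.mem_Icc] at *; omega
  · intro a ha; simp only [Finset.mem_Icc] at *; omega
  · intro a ha; simp only [Finset.mem_Icc] at ha; omega
  · intro a ha; simp only [Finset.mem_Icc] at ha; omega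
  · intro a ha
    simp only [Finset.mem_Icc] at ha
    congr 1
    exact negpow_eq _ _ (by omega)

private lemma half_sum (D : Module.End 𝕜 V) (N : ℕ) (hN : 1 ≤ N) :
    ∑ i ∈ Finset.Icc 1 (2 * N - 1),
      (-1 : ℤ) ^ (i - 1) *
        ((finrank 𝕜 ↥(ker (D ^ i)) : ℤ) - finrank 𝕜 ↥(range (D ^ (2 * N - i)))) =
    2 * (∑ i ∈ Finset.Icc 1 (2 * N - 1),
        (-1 : ℤ) ^ (i - 1) * (finrank 𝕜 ↥(ker (D ^ i)) : ℤ)) - finrank 𝕜 V := by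
  have key : ∀ i ∈ Finset.Icc 1 (2 * N - 1),
      (-1 : ℤ) ^ (i - 1) *
        ((finrank 𝕜 ↥(ker (D ^ i)) : ℤ) - finrank 𝕜 ↥(range (D ^ (2 * N - i)))) =
      (-1 : ℤ) ^ (i - 1) * (finrank 𝕜 ↥(ker (D ^ i)) : ℤ)
      + (-1 : ℤ) ^ (i - 1) * (finrank 𝕜 ↥(ker (D ^ (2 * N - i))) : ℤ)
      - (-1 : ℤ) ^ (i - 1) * (finrank 𝕜 V : ℤ) := by
    intro i hi
    have hrn := LinearMap.finrank_range_add_finrank_ker (D ^ (2 * N - i))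
    have : (finrank 𝕜 ↥(range (D ^ (2 * N - i))) : ℤ)
        = (finrank 𝕜 V : ℤ) - finrank 𝕜 ↥(ker (D ^ (2 * N - i))) := by
      push_cast [← hrn]; ring
    rw [this]; ring
  rw [Finset.sum_congr rfl key]
  rw [Finset.sum_sub_distrib, Finset.sum_add_distrib, refl_sum]
  rw [← Finset.sum_mul, sgn_sum]
  have : (2 * N - 1) % 2 = 1 := by omega
  rw [if_pos this]
  ring

private lemma ker_sum_stable (D : Module.End 𝕜 V) (N M : ℕ) (hNM : N ≤ M) (hN : 1 ≤ N)
    (hDN : D ^ (2 * N) = 0) :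
    ∑ i ∈ Finset.Icc 1 (2 * M - 1),
        (-1 : ℤ) ^ (i - 1) * (finrank 𝕜 ↥(ker (D ^ i)) : ℤ) =
    ∑ i ∈ Finset.Icc 1 (2 * N - 1),
        (-1 : ℤ) ^ (i - 1) * (finrank 𝕜 ↥(ker (D ^ i)) : ℤ) := by
  have hsplit : Finset.Icc 1 (2 * M - 1) =
      Finset.Icc 1 (2 * N - 1) ∪ Finset.Icc (2 * N) (2 * M - 1) := by
    ext x; simp only [Finset.mem_union, Finset.mem_Icc]; omega
  have hdisj : Disjoint (Finset.Icc 1 (2 * N - 1)) (Finset.Icc (2 * N) (2 * M - 1)) := by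
    rw [Finset.disjoint_left]; intro a ha hb
    simp only [Finset.mem_Icc] at *; omega
  rw [hsplit, Finset.sum_union hdisj]
  have hz : ∀ i ∈ Finset.Icc (2 * N) (2 * M - 1),
      (-1 : ℤ) ^ (i - 1) * (finrank 𝕜 ↥(ker (D ^ i)) : ℤ)
      = (-1 : ℤ) ^ (i - 1) * (finrank 𝕜 V : ℤ) := by
    intro i hi
    simp only [Finset.mem_Icc] at hi
    have : D ^ i = 0 := by
      have : D ^ i = D ^ (2 * N) * D ^ (i - 2 * N) := by
        rw [← pow_add]; congr 1; omega
      rw [this, hDN, zero_mul]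
    rw [this, LinearMap.ker_zero]
    congr 1
    exact_mod_cast finrank_top 𝕜 V
  rw [Finset.sum_congr rfl hz, ← Finset.sum_mul]
  have h1 : ∑ i ∈ Finset.Icc (2*N) (2*M-1), (-1:ℤ)^(i-1)
      = ∑ i ∈ Finset.Icc 1 (2*M-1), (-1:ℤ)^(i-1) - ∑ i ∈ Finset.Icc 1 (2*N-1), (-1:ℤ)^(i-1) := by
    rw [hsplit, Finset.sum_union hdisj]; ring
  rw [h1, sgn_sum, sgn_sum, if_pos (by omega : (2*M-1) % 2 = 1), if_pos (by omega : (2*N-1) % 2 = 1)]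
  ring

end

/-- Remark 5.6, stability. If `D^{2N} = 0` and `D^{2M} = 0`
(`N, M ≥ 1`) on the finite-dimensional space `V`, then the alternating sums
`Σ_{i=1}^{2N−1} (−1)^{i−1} (dim ker D^i − dim range D^{2N−i})` and
`Σ_{i=1}^{2M−1} (−1)^{i−1} (dim ker D^i − dim range D^{2M−i})` agree. -/
theorem stmt14 {𝕜 V : Type*} [Field 𝕜] [AddCommGroup V] [Module 𝕜 V] [FiniteDimensional 𝕜 V]
    (D : Module.End 𝕜 V) (N M : ℕ) (hN : 1 ≤ N) (hM : 1 ≤ M)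
    (hDN : D ^ (2 * N) = 0) (hDM : D ^ (2 * M) = 0) :
    ∑ i ∈ Finset.Icc 1 (2 * N - 1),
      (-1 : ℤ) ^ (i - 1) *
        ((finrank 𝕜 ↥(ker (D ^ i)) : ℤ) - finrank 𝕜 ↥(range (D ^ (2 * N - i)))) =
    ∑ i ∈ Finset.Icc 1 (2 * M - 1),
      (-1 : ℤ) ^ (i - 1) *
        ((finrank 𝕜 ↥(ker (D ^ i)) : ℤ) - finrank 𝕜 ↥(range (D ^ (2 * M - i)))) := by
  rw [half_sum D N hN, half_sum D M hM]
  rcases le_total N M with h | h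
  · rw [ker_sum_stable D N M h hN hDN]
  · rw [ker_sum_stable D M N h hM hDM]
end
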